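/- Every Bol*-AG-band is a commutative semigroup; that is, if a magma S satisfies the left invertive law, the Bol* identity a·((b·c)·d) = ((a·b)·c)·d, and every element is idempotent (a·a = a for all a), then S is commutative (a·b = b·a for all a,b) and associative ((a·b)·c = a·(b·c) for all a,b,c). -/
import Mathlib


theorem Bol_star_AG_band_is_commutative_semigroup {S : Type*} [Mul S]
    (li : ∀ a b c : S, (a * b) * c = (c * b) * a)
    (bol : ∀ a b c d : S, a * ((b * c) * d) = ((a * b) * c) * d)
    (idem : ∀ a : S, a * a = a) :
    (∀ a b : S, a * b = b * a) ∧
    (∀ a b c : S, (a * b) * c = a * (b * c)) := by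
  have star : ∀ a b d : S, a * (b * d) = (b * a) * d := by
    intro a b d
    have h := bol a b b d
    rw [idem b, li a b b, idem b] at h
    exact h
  have R : ∀ x y z : S, (x * y) * z = y * (x * z) := fun x y z => (star y x z).symm
  have key : ∀ a b c : S, b * (a * c) = b * (c * a) := by
    intro a b c
    rw [← R a b c, li a b c, R c b a]
  have comm : ∀ a c : S, a * c = c * a := by
    intro a c
    have h1 : a * c = (a * c) * (c * a) := by
      have h := key a (a * c) c
      rwa [idem] at h
    have h2 : c * a = (c * a) * (a * c) := by
      have h := key c (c * a) a
      rwa [idem] at h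
    have e1 : ((c * a) * (a * c)) * (c * a) = a * c := by
      rw [R, idem, ← h1]
    have e2 : ((c * a) * (a * c)) * (c * a) = c * a := by
      rw [← h2, idem]
    rw [← e1, e2]
  refine ⟨comm, fun a b c => ?_⟩
  rw [star a b c, comm b a]
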